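/- Let f(x) = a_0 + a_{n_1}x^{n_1} + ... + a_{n_r}x^{n_r} be an integer polynomial with |a_0| > |a_{n_1}| + ... + |a_{n_r}| and a_{n_r} ≠ 0. Then every nonconstant factor of f in Z[x] is non-reciprocal, i.e., no nonconstant factor g satisfies g(x) = ±x^{deg g} g(1/x). -/

import Mathlib

open Polynomial

lemma stmt_2_aux (r : ℕ) (n : Fin (r + 1) → ℕ) (a : Fin (r + 1) → ℤ) (a0 : ℤ)
    (hdom : |a0| > ∑ i, |a i|)
    (f : ℤ[X]) (hf : f = C a0 + ∑ i, C (a i) * X ^ (n i))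
    (z : ℂ) (hz : ‖z‖ ≤ 1) :
    (f.map (Int.castRingHom ℂ)).eval z ≠ 0 := by
  have hev : (f.map (Int.castRingHom ℂ)).eval z
      = (a0 : ℂ) + ∑ i, (a i : ℂ) * z ^ (n i) := by
    subst hf
    simp [Polynomial.map_sum, Polynomial.eval_finset_sum]
  rw [hev]
  intro h0
  have h1 : (a0 : ℂ) = -(∑ i, (a i : ℂ) * z ^ (n i)) := by linear_combination h0
  have h2 : ‖(a0 : ℂ)‖ ≤ ∑ i, ‖(a i : ℂ) * z ^ (n i)‖ := by
    rw [h1, norm_neg]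
    exact norm_sum_le _ _
  have h3 : ∀ i : Fin (r + 1), ‖(a i : ℂ) * z ^ (n i)‖ ≤ (|a i| : ℝ) := by
    intro i
    rw [norm_mul, norm_pow]
    have : ‖((a i : ℂ))‖ = (|a i| : ℝ) := by
      rw [← Complex.norm_intCast]
    rw [this]
    have hz' : ‖z‖ ^ (n i) ≤ 1 := pow_le_one₀ (norm_nonneg z) hz
    calc (|a i| : ℝ) * ‖z‖ ^ (n i) ≤ (|a i| : ℝ) * 1 := by
          exact mul_le_mul_of_nonneg_left hz' (by positivity)
      _ = (|a i| : ℝ) := mul_one _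
  have h4 : ‖((a0 : ℂ))‖ = (|a0| : ℝ) := by
    rw [← Complex.norm_intCast]
  have h5 : (|a0| : ℝ) ≤ ∑ i, (|a i| : ℝ) := by
    rw [← h4]
    exact h2.trans (Finset.sum_le_sum fun i _ => h3 i)
  have h6 : (∑ i, |a i| : ℤ) < |a0| := hdom
  have : ((∑ i, |a i| : ℤ) : ℝ) < (|a0| : ℝ) := by exact_mod_cast h6
  push_cast at this
  linarith

theorem stmt_2 (r : ℕ) (n : Fin (r + 1) → ℕ) (a : Fin (r + 1) → ℤ) (a0 : ℤ)
    (hmono : StrictMono n) (hpos : 0 < n 0)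
    (hdom : |a0| > ∑ i, |a i|) (hlead : a (Fin.last r) ≠ 0)
    (f : ℤ[X]) (hf : f = C a0 + ∑ i, C (a i) * X ^ (n i))
    (g : ℤ[X]) (hg : g ∣ f) (hgdeg : 0 < g.natDegree) :
    ¬ (g = g.reverse ∨ g = -g.reverse) := by
  intro hrec
  -- g maps to ℂ with positive degree, so it has a root z
  set φ := Int.castRingHom ℂ
  have hgmapdeg : 0 < (g.map φ).natDegree := by
    rwa [Polynomial.natDegree_map_eq_of_injective (Int.cast_injective)]
  have hgmapne : g.map φ ≠ 0 := fun h => by simp [h] at hgmapdeg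
  have hdeg : 0 < (g.map φ).degree := by
    rwa [Polynomial.natDegree_pos_iff_degree_pos] at hgmapdeg
  obtain ⟨z, hzroot⟩ := Complex.exists_root hdeg
  have hzroot' : (g.map φ).eval z = 0 := hzroot
  -- every root of f has abs > 1
  have hfroot : ∀ w : ℂ, (g.map φ).eval w = 0 → 1 < ‖w‖ := by
    intro w hw
    by_contra hle
    push_neg at hle
    refine stmt_2_aux r n a a0 hdom f hf w hle ?_
    obtain ⟨c, hc⟩ := hg
    rw [hc, Polynomial.map_mul, Polynomial.eval_mul, hw, zero_mul]
  have hz1 : 1 < ‖z‖ := hfroot z hzroot'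
  have hzne : z ≠ 0 := by
    intro h; rw [h] at hz1; simp at hz1; linarith
  -- consider z⁻¹, root of reverse g
  have : Invertible z := invertibleOfNonzero hzne
  have hrev : Polynomial.eval₂ φ (⅟ z) g.reverse = 0 := by
    rw [Polynomial.eval₂_reverse_eq_zero_iff]
    rwa [Polynomial.eval_map] at hzroot'
  have hinvroot : (g.map φ).eval z⁻¹ = 0 := by
    rw [Polynomial.eval_map, ← invOf_eq_inv z]
    rcases hrec with h | h
    · rw [h]; exact hrev
    · rw [h]; simpa using hrev
  have := hfroot z⁻¹ hinvroot
  rw [norm_inv] at this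
  have h2 : ‖z‖ < 1 := by
    have h0 : 0 < ‖z‖ := norm_pos_iff.mpr hzne
    rw [lt_inv_comm₀ one_pos h0] at this
    simpa using this
  linarith
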